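/- arXiv:1510.00536 — 2 statements merged into one kernel-verified Lean document; each statement's English description precedes it below -/
import Mathlib

section
/- For all x ∈ ℝ^k with all coordinates nonzero, ρ_k(x_1^{-1},...,x_k^{-1}) = ρ_k(x_1,...,x_k) · ∏_{i=1}^k x_i^2, where ρ_k(x) = 2^{-(n+1)} ∏_{1≤i<j≤k} |x_i - x_j| · ∫_{D_x} ∏_{i=1}^k |∑_{j=0}^{n-k} t_j x_i^j| dt_0⋯dt_{n-k}, with D_x = {(t_0,...,t_{n-k}) : max_{0≤i≤n} |∑_{j=0}^{n-k} (-1)^j σ_{k-i+j}(x) t_j| ≤ 1}. -/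
open MeasureTheory Finset

/-- The `m`-th elementary symmetric polynomial of `x_1, …, x_k`. -/
noncomputable def esym (k : ℕ) (x : Fin k → ℝ) (m : ℕ) : ℝ :=
  ∑ s ∈ (Finset.univ : Finset (Fin k)).powersetCard m, ∏ i ∈ s, x i

/-- Elementary symmetric polynomials extended to integer indices (zero outside `[0,k]`). -/
noncomputable def esymZ (k : ℕ) (x : Fin k → ℝ) (m : ℤ) : ℝ :=
  if 0 ≤ m then esym k x m.toNat else 0

/-- The domain of integration `D_x`. -/
def Dset (n k : ℕ) (x : Fin k → ℝ) : Set (Fin (n - k + 1) → ℝ) :=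
  {t | ∀ i : Fin (n + 1),
    |∑ j : Fin (n - k + 1), (-1) ^ (j : ℕ) * esymZ k x ((k : ℤ) - (i : ℤ) + (j : ℤ)) * t j| ≤ 1}

/-- The `k`-point correlation function `ρ_k`. -/
noncomputable def rho (n k : ℕ) (x : Fin k → ℝ) : ℝ :=
  (2 : ℝ) ^ (-(n : ℤ) - 1) *
    (∏ p ∈ Finset.univ.filter (fun p : Fin k × Fin k => p.1 < p.2), |x p.1 - x p.2|) *
    ∫ t in Dset n k x, ∏ i : Fin k, |∑ j : Fin (n - k + 1), t j * x i ^ (j : ℕ)|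

lemma esym_zero_of_lt {k : ℕ} (x : Fin k → ℝ) {m : ℕ} (h : k < m) : esym k x m = 0 := by
  unfold esym
  rw [Finset.powersetCard_eq_empty.2 (by simpa using h), Finset.sum_empty]

lemma esym_compl {k : ℕ} (x : Fin k → ℝ) (hx : ∀ i, x i ≠ 0) {m : ℕ} (hm : m ≤ k) :
    esym k (fun i => (x i)⁻¹) m = esym k x (k - m) / ∏ i, x i := by
  have he : (∏ i, x i) ≠ 0 := Finset.prod_ne_zero_iff.2 fun i _ => hx i
  rw [eq_div_iff he]
  unfold esym
  rw [Finset.sum_mul]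
  refine Finset.sum_bij' (fun s _ => sᶜ) (fun s _ => sᶜ) ?_ ?_ ?_ ?_ ?_
  · intro s hs
    rw [Finset.mem_powersetCard_univ] at hs ⊢
    rw [Finset.card_compl, hs, Fintype.card_fin]
  · intro s hs
    rw [Finset.mem_powersetCard_univ] at hs ⊢
    rw [Finset.card_compl, hs, Fintype.card_fin]
    omega
  · intro s _; exact compl_compl s
  · intro s _; exact compl_compl s
  · intro s _
    have hs0 : (∏ i ∈ s, x i) ≠ 0 := Finset.prod_ne_zero_iff.2 fun i _ => hx i
    simp only
    rw [← Finset.prod_mul_prod_compl s x, Finset.prod_inv_distrib]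
    rw [← mul_assoc, inv_mul_cancel₀ hs0, one_mul]

lemma esymZ_inv {k : ℕ} (x : Fin k → ℝ) (hx : ∀ i, x i ≠ 0) (m : ℤ) :
    esymZ k (fun i => (x i)⁻¹) m = esymZ k x ((k : ℤ) - m) / ∏ i, x i := by
  unfold esymZ
  by_cases hm : 0 ≤ m
  · by_cases hmk : m ≤ (k : ℤ)
    · rw [if_pos hm, if_pos (by omega)]
      have h1 : m.toNat ≤ k := by omega
      have h2 : ((k : ℤ) - m).toNat = k - m.toNat := by omega
      rw [h2]; exact esym_compl x hx h1
    · rw [if_pos hm, if_neg (by omega)]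
      rw [esym_zero_of_lt (fun i => (x i)⁻¹) (m := m.toNat) (by omega), zero_div]
  · rw [if_neg hm, if_pos (by omega)]
    rw [esym_zero_of_lt x (m := ((k : ℤ) - m).toNat) (by omega), zero_div]

lemma prod_pairs {k : ℕ} (f : Fin k → ℝ) :
    ∏ p ∈ Finset.univ.filter (fun p : Fin k × Fin k => p.1 < p.2), (f p.1 * f p.2)
      = ∏ i, f i ^ (k - 1) := by
  rw [Finset.prod_mul_distrib]
  have h1 : ∏ p ∈ Finset.univ.filter (fun p : Fin k × Fin k => p.1 < p.2), f p.1
      = ∏ i, f i ^ (k - 1 - (i : ℕ)) := by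
    rw [Finset.prod_filter, Fintype.prod_prod_type]
    refine Finset.prod_congr rfl fun i _ => ?_
    show ∏ a : Fin k, (if i < a then f i else 1) = f i ^ (k - 1 - (i : ℕ))
    rw [← Finset.prod_filter, Finset.prod_const, Finset.filter_lt_eq_Ioi, Fin.card_Ioi]
  have h2 : ∏ p ∈ Finset.univ.filter (fun p : Fin k × Fin k => p.1 < p.2), f p.2
      = ∏ i, f i ^ (i : ℕ) := by
    rw [Finset.prod_filter, Fintype.prod_prod_type]
    rw [Finset.prod_comm]
    refine Finset.prod_congr rfl fun j _ => ?_
    show ∏ a : Fin k, (if a < j then f j else 1) = f j ^ (j : ℕ)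
    rw [← Finset.prod_filter, Finset.prod_const, Finset.filter_gt_eq_Iio, Fin.card_Iio]
  rw [h1, h2, ← Finset.prod_mul_distrib]
  refine Finset.prod_congr rfl fun i _ => ?_
  rw [← pow_add]
  congr 1
  omega

lemma Dset_meas (n k : ℕ) (x : Fin k → ℝ) : MeasurableSet (Dset n k x) := by
  have : Dset n k x = ⋂ i : Fin (n + 1),
      {t : Fin (n - k + 1) → ℝ |
        |∑ j : Fin (n - k + 1), (-1) ^ (j : ℕ) * esymZ k x ((k : ℤ) - (i : ℤ) + (j : ℤ)) * t j| ≤ 1} := by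
    ext t; simp [Dset, Set.mem_iInter]
  rw [this]
  refine MeasurableSet.iInter fun i => ?_
  refine measurableSet_le ?_ measurable_const
  refine Measurable.abs (Finset.measurable_sum _ fun j _ => ?_)
  exact (measurable_pi_apply j).const_mul _

lemma neg_one_pow_sub (a b : ℕ) (h : b ≤ a) : ((-1 : ℝ)) ^ (a - b) = (-1) ^ a * (-1) ^ b := by
  rw [pow_sub₀ (-1 : ℝ) (by norm_num) h]
  congr 1
  rw [← inv_pow, inv_neg, inv_one]

theorem rho_inversion (n k : ℕ) (hn : 2 ≤ n) (hk1 : 1 ≤ k) (hkn : k ≤ n)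
    (x : Fin k → ℝ) (hx : ∀ i, x i ≠ 0) :
    rho n k (fun i => (x i)⁻¹) = rho n k x * ∏ i : Fin k, (x i) ^ 2 := by
  set e : ℝ := ∏ i, x i with he_def
  have he : e ≠ 0 := Finset.prod_ne_zero_iff.2 fun i _ => hx i
  set a : ℝ := |e| with ha_def
  have ha : 0 < a := abs_pos.2 he
  -- the linear change of variables
  set Φ : (Fin (n - k + 1) → ℝ) → (Fin (n - k + 1) → ℝ) :=
    fun u => e⁻¹ • (u ∘ Fin.rev) with hΦ_def
  have hrevval : ∀ j : Fin (n - k + 1), ((Fin.rev j : Fin (n - k + 1)) : ℕ) = n - k - (j : ℕ) := by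
    intro j
    rw [Fin.val_rev]
    omega
  -- B1 : sum identity for the integrand
  have B1 : ∀ (u : Fin (n - k + 1) → ℝ) (i : Fin k),
      ∑ j : Fin (n - k + 1), Φ u j * x i ^ (j : ℕ)
        = e⁻¹ * (x i) ^ (n - k) * ∑ j : Fin (n - k + 1), u j * ((x i)⁻¹) ^ (j : ℕ) := by
    intro u i
    have := Equiv.sum_comp (Fin.revPerm : Equiv.Perm (Fin (n - k + 1)))
      (fun j => Φ u j * x i ^ (j : ℕ))
    rw [← this]
    rw [Finset.mul_sum]
    refine Finset.sum_congr rfl fun j _ => ?_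
    have hj : (j : ℕ) ≤ n - k := by omega
    simp only [hΦ_def, Fin.revPerm_apply, Pi.smul_apply, Function.comp_apply, smul_eq_mul,
      Fin.rev_rev, hrevval]
    rw [pow_sub₀ (x i) (hx i) hj, ← inv_pow]
    ring
  -- B2 : sign identity for the domain conditions
  have B2 : ∀ (u : Fin (n - k + 1) → ℝ) (i : Fin (n + 1)),
      ∑ j : Fin (n - k + 1), (-1) ^ (j : ℕ) *
          esymZ k x ((k : ℤ) - ((Fin.rev i : Fin (n + 1)) : ℤ) + (j : ℤ)) * Φ u j
        = (-1 : ℝ) ^ (n - k) * ∑ j : Fin (n - k + 1), (-1) ^ (j : ℕ) *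
            esymZ k (fun i => (x i)⁻¹) ((k : ℤ) - (i : ℤ) + (j : ℤ)) * u j := by
    intro u i
    have hirev : ((Fin.rev i : Fin (n + 1)) : ℤ) = (n : ℤ) - (i : ℤ) := by
      have h1 : ((Fin.rev i : Fin (n + 1)) : ℕ) = n - (i : ℕ) := by rw [Fin.val_rev]; omega
      have h2 : (i : ℕ) ≤ n := by omega
      rw [h1]; push_cast [h2]; ring
    have key := Equiv.sum_comp (Fin.revPerm : Equiv.Perm (Fin (n - k + 1)))
      (fun j => (-1 : ℝ) ^ (j : ℕ) *
          esymZ k x ((k : ℤ) - ((Fin.rev i : Fin (n + 1)) : ℤ) + (j : ℤ)) * Φ u j)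
    rw [← key, Finset.mul_sum]
    refine Finset.sum_congr rfl fun j _ => ?_
    have hj : (j : ℕ) ≤ n - k := by omega
    have hjrev : ((Fin.rev j : Fin (n - k + 1)) : ℤ) = (n : ℤ) - (k : ℤ) - (j : ℤ) := by
      rw [hrevval]; push_cast [Nat.sub_sub, hkn, hj]
      rw [Nat.cast_sub (by omega)]; push_cast; ring
    simp only [hΦ_def, Fin.revPerm_apply, Pi.smul_apply, Function.comp_apply, smul_eq_mul,
      Fin.rev_rev, hrevval, hjrev]
    rw [esymZ_inv x hx ((k : ℤ) - (i : ℤ) + (j : ℤ))]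
    have harg : (k : ℤ) - ((Fin.rev i : Fin (n + 1)) : ℤ) + ((n : ℤ) - (k : ℤ) - (j : ℤ))
        = (k : ℤ) - ((k : ℤ) - (i : ℤ) + (j : ℤ)) := by rw [hirev]; ring
    rw [hirev]
    rw [show ((k : ℤ) - ((n : ℤ) - (i : ℤ)) + ((n - k - (j : ℕ) : ℕ) : ℤ))
        = (k : ℤ) - ((k : ℤ) - (i : ℤ) + (j : ℤ)) by omega]
    rw [neg_one_pow_sub (n - k) (j : ℕ) hj]
    rw [← he_def]
    field_simp
  -- B3 : the domain transforms correctly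
  have B3 : Dset n k (fun i => (x i)⁻¹) = Φ ⁻¹' (Dset n k x) := by
    have habs : ∀ (u : Fin (n - k + 1) → ℝ) (i : Fin (n + 1)),
        |∑ j : Fin (n - k + 1), (-1) ^ (j : ℕ) *
            esymZ k x ((k : ℤ) - ((Fin.rev i : Fin (n + 1)) : ℤ) + (j : ℤ)) * Φ u j|
          = |∑ j : Fin (n - k + 1), (-1) ^ (j : ℕ) *
              esymZ k (fun i => (x i)⁻¹) ((k : ℤ) - (i : ℤ) + (j : ℤ)) * u j| := by
      intro u i
      rw [B2, abs_mul, abs_pow, abs_neg, abs_one, one_pow, one_mul]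
    ext u
    simp only [Dset, Set.mem_preimage, Set.mem_setOf_eq]
    constructor
    · intro h i
      have h2 := habs u (Fin.rev i)
      rw [Fin.rev_rev] at h2
      rw [h2]
      exact h (Fin.rev i)
    · intro h i
      rw [← habs u i]
      exact h (Fin.rev i)
  -- pointwise bound for the integrand factors
  have hsumx : ∀ (u : Fin (n - k + 1) → ℝ) (i : Fin k),
      |∑ j : Fin (n - k + 1), u j * ((x i)⁻¹) ^ (j : ℕ)|
        = a * (|x i| ^ (n - k))⁻¹ * |∑ j : Fin (n - k + 1), Φ u j * x i ^ (j : ℕ)| := by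
    intro u i
    rw [B1 u i, abs_mul, abs_mul, abs_inv, abs_pow]
    have hxa : |x i| ≠ 0 := abs_ne_zero.2 (hx i)
    field_simp
    ring
  -- B4 : the integrand transforms correctly
  have B4 : ∀ (u : Fin (n - k + 1) → ℝ),
      ∏ i : Fin k, |∑ j : Fin (n - k + 1), u j * ((x i)⁻¹) ^ (j : ℕ)|
        = (a ^ k * (a ^ (n - k))⁻¹) *
          ∏ i : Fin k, |∑ j : Fin (n - k + 1), Φ u j * x i ^ (j : ℕ)| := by
    intro u
    have habsprod : ∏ i : Fin k, |x i| = a := by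
      rw [ha_def, he_def, Finset.abs_prod]
    calc ∏ i : Fin k, |∑ j : Fin (n - k + 1), u j * ((x i)⁻¹) ^ (j : ℕ)|
        = ∏ i : Fin k, (a * (|x i| ^ (n - k))⁻¹ *
            |∑ j : Fin (n - k + 1), Φ u j * x i ^ (j : ℕ)|) :=
          Finset.prod_congr rfl fun i _ => hsumx u i
      _ = ((∏ _i : Fin k, a) * ∏ i : Fin k, (|x i| ^ (n - k))⁻¹) *
            ∏ i : Fin k, |∑ j : Fin (n - k + 1), Φ u j * x i ^ (j : ℕ)| := by
          rw [Finset.prod_mul_distrib, Finset.prod_mul_distrib]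
      _ = (a ^ k * (a ^ (n - k))⁻¹) *
            ∏ i : Fin k, |∑ j : Fin (n - k + 1), Φ u j * x i ^ (j : ℕ)| := by
          rw [Finset.prod_const, Finset.card_univ, Fintype.card_fin,
            Finset.prod_inv_distrib, Finset.prod_pow, habsprod]
  -- the integral transforms correctly
  have hDinv : MeasurableSet (Dset n k (fun i => (x i)⁻¹)) := Dset_meas n k _
  have hD : MeasurableSet (Dset n k x) := Dset_meas n k x
  set h : (Fin (n - k + 1) → ℝ) → ℝ :=
    fun t => ∏ i : Fin k, |∑ j : Fin (n - k + 1), t j * x i ^ (j : ℕ)| with hh_def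
  have hψ : ∀ u : Fin (n - k + 1) → ℝ,
      (MeasurableEquiv.piCongrLeft (fun _ : Fin (n - k + 1) => ℝ) Fin.revPerm) u
        = u ∘ Fin.rev := by
    intro u; funext jj
    have h3 := MeasurableEquiv.piCongrLeft_apply_apply
      (Fin.revPerm : Equiv.Perm (Fin (n - k + 1)))
      (β := fun _ : Fin (n - k + 1) => ℝ) u (Fin.rev jj)
    simpa [Fin.rev_rev] using h3
  have hfinrank : Module.finrank ℝ (Fin (n - k + 1) → ℝ) = n - k + 1 := by
    rw [Module.finrank_pi]
    exact Fintype.card_fin _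
  have hint : (∫ t in Dset n k (fun i => (x i)⁻¹),
        ∏ i : Fin k, |∑ j : Fin (n - k + 1), t j * ((x i)⁻¹) ^ (j : ℕ)|)
      = (a ^ k * (a ^ (n - k))⁻¹) * a ^ (n - k + 1) * ∫ t in Dset n k x, h t := by
    rw [← integral_indicator hDinv]
    have step1 : ∀ u, Set.indicator (Dset n k (fun i => (x i)⁻¹))
        (fun t => ∏ i : Fin k, |∑ j : Fin (n - k + 1), t j * ((x i)⁻¹) ^ (j : ℕ)|) u
        = (a ^ k * (a ^ (n - k))⁻¹) * Set.indicator (Dset n k x) h (Φ u) := by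
      intro u
      by_cases hu : u ∈ Dset n k (fun i => (x i)⁻¹)
      · have hu2 : Φ u ∈ Dset n k x := by rw [B3] at hu; exact hu
        rw [Set.indicator_of_mem hu, Set.indicator_of_mem hu2, B4 u]
      · have hu2 : Φ u ∉ Dset n k x := by
          intro hc; exact hu (by rw [B3]; exact hc)
        rw [Set.indicator_of_notMem hu, Set.indicator_of_notMem hu2, mul_zero]
    simp_rw [step1]
    rw [MeasureTheory.integral_const_mul]
    have hcomp : (∫ u, Set.indicator (Dset n k x) h (Φ u))
        = ∫ v, Set.indicator (Dset n k x) h (e⁻¹ • v) := by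
      have h4 := MeasurePreserving.integral_comp'
        (volume_measurePreserving_piCongrLeft (fun _ : Fin (n - k + 1) => ℝ) Fin.revPerm)
        (fun v => Set.indicator (Dset n k x) h (e⁻¹ • v))
      rw [← h4]
      refine integral_congr_ae (Filter.Eventually.of_forall fun u => ?_)
      simp only [hψ u, hΦ_def]
    rw [hcomp, MeasureTheory.Measure.integral_comp_smul volume
      (fun v => Set.indicator (Dset n k x) h v) e⁻¹]
    rw [integral_indicator hD, hfinrank]
    rw [smul_eq_mul]
    have : |((e⁻¹) ^ (n - k + 1))⁻¹| = a ^ (n - k + 1) := by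
      rw [inv_pow, inv_inv, abs_pow]
    rw [this]
    ring
  -- the Vandermonde factor transforms correctly
  have hpair : (∏ p ∈ Finset.univ.filter (fun p : Fin k × Fin k => p.1 < p.2),
        |(x p.1)⁻¹ - (x p.2)⁻¹|)
      = (∏ p ∈ Finset.univ.filter (fun p : Fin k × Fin k => p.1 < p.2), |x p.1 - x p.2|) *
        (a ^ (k - 1))⁻¹ := by
    have hstep : ∀ p : Fin k × Fin k,
        |(x p.1)⁻¹ - (x p.2)⁻¹| = |x p.1 - x p.2| * (|x p.1| * |x p.2|)⁻¹ := by
      intro p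
      rw [inv_sub_inv (hx p.1) (hx p.2), abs_div, abs_mul, div_eq_mul_inv, abs_sub_comm]
    calc (∏ p ∈ Finset.univ.filter (fun p : Fin k × Fin k => p.1 < p.2),
          |(x p.1)⁻¹ - (x p.2)⁻¹|)
        = ∏ p ∈ Finset.univ.filter (fun p : Fin k × Fin k => p.1 < p.2),
            (|x p.1 - x p.2| * (|x p.1| * |x p.2|)⁻¹) :=
          Finset.prod_congr rfl fun p _ => hstep p
      _ = (∏ p ∈ Finset.univ.filter (fun p : Fin k × Fin k => p.1 < p.2), |x p.1 - x p.2|) *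
            (∏ p ∈ Finset.univ.filter (fun p : Fin k × Fin k => p.1 < p.2),
              (|x p.1| * |x p.2|))⁻¹ := by
          rw [Finset.prod_mul_distrib, Finset.prod_inv_distrib]
      _ = _ := by
          rw [prod_pairs (fun i => |x i|), Finset.prod_pow]
          congr 3
          rw [ha_def, he_def, Finset.abs_prod]
  -- assembly
  have hsq : (∏ i : Fin k, (x i) ^ 2) = a ^ 2 := by
    rw [Finset.prod_pow, ha_def, ← sq_abs]
  simp only [rho]
  rw [hint, hpair, hsq]
  have e1 : a ^ k = a ^ (k - 1) * a := by
    rw [← pow_succ]; congr 1; omega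
  have e2 : a ^ (n - k + 1) = a ^ (n - k) * a := pow_succ a (n - k)
  have hb : a ^ (k - 1) ≠ 0 := pow_ne_zero _ ha.ne'
  have hc : a ^ (n - k) ≠ 0 := pow_ne_zero _ ha.ne'
  rw [e1, e2]
  field_simp
  ring
end

section
/- For any n ≥ 2 and x ∈ [-1 + 1/√2, 1 - 1/√2], the one-point density satisfies ρ(x) = (1/12)·(3 + ∑_{k=1}^{n-1} (k+1)^2 x^{2k}), where ρ(x) = 2^{-(n+1)} ∫_{D_x} |∑_{j=1}^n j t_j x^{j-1}| dt_1⋯dt_n and D_x = {(t_1,...,t_n) : max_{1≤j≤n} |t_j| ≤ 1, |t_n x^n + ⋯ + t_1 x| ≤ 1}. -/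
open MeasureTheory Finset

noncomputable def nu : Measure ℝ := volume.restrict (Set.Icc (-1) 1)

lemma nu_int_id : ∫ t, t ∂nu = 0 := by
  rw [nu, integral_Icc_eq_integral_Ioc, ← intervalIntegral.integral_of_le (by norm_num : (-1:ℝ) ≤ 1),
    integral_id]
  norm_num

lemma nu_int_sq : ∫ t, t^2 ∂nu = 2/3 := by
  rw [nu, integral_Icc_eq_integral_Ioc, ← intervalIntegral.integral_of_le (by norm_num : (-1:ℝ) ≤ 1),
    integral_pow]
  norm_num

lemma nu_int_one : ∫ t, (1:ℝ) ∂nu = 2 := by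
  rw [integral_const, smul_eq_mul, mul_one, nu, measureReal_def, Measure.restrict_apply MeasurableSet.univ,
    Set.univ_inter, Real.volume_Icc]
  norm_num

lemma int_linear (a b c : ℝ) : ∫ t in a..b, (t + c) = ((b+c)^2 - (a+c)^2)/2 := by
  rw [intervalIntegral.integral_comp_add_right (fun u => u) c, integral_id]

lemma nu_int_abs (c : ℝ) (hc : |c| ≤ 1) : ∫ t, |t + c| ∂nu = 1 + c^2 := by
  rw [abs_le] at hc
  obtain ⟨hc1, hc2⟩ := hc
  rw [nu, integral_Icc_eq_integral_Ioc, ← intervalIntegral.integral_of_le (by norm_num : (-1:ℝ) ≤ 1)]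
  have h1 : IntervalIntegrable (fun t : ℝ => |t + c|) volume (-1) (-c) :=
    (continuous_abs.comp (continuous_id.add continuous_const)).intervalIntegrable _ _
  have h2 : IntervalIntegrable (fun t : ℝ => |t + c|) volume (-c) 1 :=
    (continuous_abs.comp (continuous_id.add continuous_const)).intervalIntegrable _ _
  rw [← intervalIntegral.integral_add_adjacent_intervals h1 h2]
  have e1 : ∫ t in (-1:ℝ)..(-c), |t + c| = ∫ t in (-1:ℝ)..(-c), -(t + c) := by
    apply intervalIntegral.integral_congr
    intro t ht
    rw [Set.uIcc_of_le (by linarith : (-1:ℝ) ≤ -c)] at ht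
    show |t + c| = -(t + c)
    rw [abs_of_nonpos (by linarith [ht.2])]
  have e2 : ∫ t in (-c:ℝ)..1, |t + c| = ∫ t in (-c:ℝ)..1, (t + c) := by
    apply intervalIntegral.integral_congr
    intro t ht
    rw [Set.uIcc_of_le (by linarith : (-c:ℝ) ≤ 1)] at ht
    show |t + c| = t + c
    rw [abs_of_nonneg (by linarith [ht.1])]
  rw [e1, e2, intervalIntegral.integral_neg, int_linear, int_linear]
  ring

lemma geom_deriv_id (m : ℕ) (y : ℝ) :
    (1 - y)^2 * ∑ j ∈ range m, ((j:ℝ)+1) * y^j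
      = 1 - ((m:ℝ)+1) * y^m + (m:ℝ) * y^(m+1) := by
  induction m with
  | zero => simp
  | succ m ih =>
    rw [Finset.sum_range_succ, mul_add, ih]
    push_cast
    ring

lemma sum_deriv_le (m : ℕ) (y : ℝ) (hy0 : 0 ≤ y) (hy : y ≤ 1 - 1 / Real.sqrt 2) :
    ∑ j ∈ range m, ((j:ℝ)+1) * y^j ≤ 2 := by
  have hs2 : Real.sqrt 2 ^ 2 = 2 := Real.sq_sqrt (by norm_num)
  have hs2' : 1 ≤ Real.sqrt 2 := by nlinarith [Real.sqrt_nonneg 2]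
  have hs2'' : 0 < Real.sqrt 2 := by linarith
  have hyb : y ≤ 1/2 := by
    have h12 : 1 / Real.sqrt 2 ≥ 1/2 := by
      rw [ge_iff_le, div_le_div_iff₀ (by norm_num) hs2'']
      nlinarith
    linarith
  have hsq : (1 - y)^2 ≥ 1/2 := by
    have : 1 - y ≥ 1 / Real.sqrt 2 := by linarith
    have h0 : (1 / Real.sqrt 2)^2 = 1/2 := by
      rw [div_pow, hs2, one_pow]
    have h1 : (1 / Real.sqrt 2)^2 ≤ (1-y)^2 :=
      pow_le_pow_left₀ (by positivity) this 2
    linarith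
  have hnum : (1 - y)^2 * ∑ j ∈ range m, ((j:ℝ)+1) * y^j ≤ 1 := by
    rw [geom_deriv_id]
    have h1 : (m:ℝ) * y^(m+1) ≤ (m:ℝ) * y^m := by
      apply mul_le_mul_of_nonneg_left _ (Nat.cast_nonneg m)
      calc y^(m+1) = y^m * y := by ring
        _ ≤ y^m * 1 := by
            apply mul_le_mul_of_nonneg_left (by linarith) (pow_nonneg hy0 m)
        _ = y^m := by ring
    have h2 : (0:ℝ) ≤ y^m := pow_nonneg hy0 m
    nlinarith [Nat.cast_nonneg (α := ℝ) m]
  have hpos : (0:ℝ) ≤ ∑ j ∈ range m, ((j:ℝ)+1) * y^j := by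
    apply Finset.sum_nonneg
    intro j _
    positivity
  nlinarith

lemma sum_tail_le (m : ℕ) (y : ℝ) (hy0 : 0 ≤ y) (hy : y ≤ 1 - 1 / Real.sqrt 2) :
    ∑ j ∈ range m, ((j:ℝ)+2) * y^(j+1) ≤ 1 := by
  have h := sum_deriv_le (m+1) y hy0 hy
  rw [Finset.sum_range_succ'] at h
  simp only [Nat.cast_zero, pow_zero] at h
  have : ∑ j ∈ range m, ((j:ℝ)+2) * y^(j+1) = ∑ j ∈ range m, (((j:ℕ)+1:ℝ)+1) * y^(j+1) := by
    apply Finset.sum_congr rfl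
    intro j _
    push_cast
    ring
  rw [this]
  push_cast at h ⊢
  linarith

instance : IsFiniteMeasure nu := by
  constructor
  rw [nu, Measure.restrict_apply MeasurableSet.univ, Set.univ_inter, Real.volume_Icc]
  simp

lemma restrict_box (k : ℕ) :
    (volume : Measure (Fin k → ℝ)).restrict (Set.univ.pi fun _ => Set.Icc (-1:ℝ) 1)
      = Measure.pi (fun _ : Fin k => nu) := by
  refine (Measure.pi_eq (μ := fun _ : Fin k => nu) fun s hs => ?_).symm
  rw [Measure.restrict_apply (MeasurableSet.univ_pi hs), ← Set.pi_inter_distrib, volume_pi,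
    Measure.pi_pi]
  exact Finset.prod_congr rfl fun i _ => (Measure.restrict_apply (hs i)).symm

lemma pi_nu_univ (k : ℕ) : (Measure.pi (fun _ : Fin k => nu)) Set.univ = 2^k := by
  rw [Measure.pi_univ]
  have h : nu Set.univ = 2 := by
    rw [nu, Measure.restrict_apply MeasurableSet.univ, Set.univ_inter, Real.volume_Icc]
    norm_num
  simp [h]

instance instFinPiNu (k : ℕ) : IsFiniteMeasure (Measure.pi (fun _ : Fin k => nu)) := by
  constructor
  rw [pi_nu_univ]
  exact ENNReal.pow_lt_top (by norm_num)

lemma integral_pi_prod : ∀ (k : ℕ) (f : Fin k → ℝ → ℝ),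
    ∫ y, ∏ i, f i (y i) ∂(Measure.pi fun _ : Fin k => nu) = ∏ i, ∫ t, f i t ∂nu := by
  intro k
  induction k with
  | zero => intro f; simp [integral_const, Measure.pi_univ, measureReal_def]
  | succ k ih =>
    intro f
    rw [← ((measurePreserving_piFinSuccAbove (fun _ : Fin (k+1) => nu) 0).symm).integral_comp']
    simp_rw [MeasurableEquiv.piFinSuccAbove_symm_apply, Fin.insertNthEquiv,
      Equiv.coe_fn_mk, Fin.insertNth_zero, Fin.prod_univ_succ, Fin.cons_zero, Fin.cons_succ,
      cast_eq]
    rw [show (∫ x : ℝ × (Fin k → ℝ), f 0 x.1 * ∏ i : Fin k, f i.succ (x.2 i)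
        ∂nu.prod (Measure.pi fun _ => nu))
      = (∫ t, f 0 t ∂nu) * ∫ y : Fin k → ℝ, ∏ i : Fin k, f i.succ (y i) ∂(Measure.pi fun _ => nu)
      from integral_prod_mul (f 0) (fun y : Fin k → ℝ => ∏ i : Fin k, f i.succ (y i)), ih]

lemma integrable_pi_prod : ∀ (k : ℕ) (f : Fin k → ℝ → ℝ), (∀ i, Integrable (f i) nu) →
    Integrable (fun y => ∏ i, f i (y i)) (Measure.pi fun _ : Fin k => nu) := by
  intro k
  induction k with
  | zero =>
    intro f _
    simp only [Finset.univ_eq_empty, Finset.prod_empty]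
    exact integrable_const 1
  | succ k ih =>
    intro f hf
    have h := ((measurePreserving_piFinSuccAbove (fun _ : Fin (k+1) => nu) 0).symm)
    rw [← h.integrable_comp_emb (MeasurableEquiv.measurableEmbedding _)]
    simp_rw [Function.comp_def, MeasurableEquiv.piFinSuccAbove_symm_apply, Fin.insertNthEquiv,
      Equiv.coe_fn_mk, Fin.insertNth_zero, Fin.prod_univ_succ, Fin.cons_zero, Fin.cons_succ,
      cast_eq]
    exact Integrable.mul_prod (hf 0) (ih _ (fun i => hf _))

lemma integrable_coord_prod (m : ℕ) (j k : Fin m) :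
    Integrable (fun y : Fin m → ℝ => y j * y k) (Measure.pi fun _ : Fin m => nu) := by
  classical
  set g : Fin m → ℝ → ℝ := fun i t => (if i = j then t else 1) * (if i = k then t else 1) with hg
  have hprod : ∀ y : Fin m → ℝ, y j * y k = ∏ i, g i (y i) := by
    intro y
    simp only [hg, Finset.prod_mul_distrib, Finset.prod_ite_eq', Finset.mem_univ, if_true]
  have : (fun y : Fin m → ℝ => y j * y k) = fun y => ∏ i, g i (y i) := funext hprod
  rw [this]
  apply integrable_pi_prod
  intro i
  have hc : Continuous (g i) := by
    apply Continuous.mul <;> [skip; skip] <;>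
    · split <;> [exact continuous_id; exact continuous_const]
  exact hc.integrableOn_Icc

lemma integral_coord_prod (m : ℕ) (j k : Fin m) :
    ∫ y, y j * y k ∂(Measure.pi fun _ : Fin m => nu)
      = if j = k then 2/3 * 2^(m-1) else 0 := by
  classical
  set g : Fin m → ℝ → ℝ := fun i t => (if i = j then t else 1) * (if i = k then t else 1) with hg
  have hprod : ∀ y : Fin m → ℝ, y j * y k = ∏ i, g i (y i) := by
    intro y
    simp only [hg, Finset.prod_mul_distrib, Finset.prod_ite_eq', Finset.mem_univ, if_true]
  rw [show (fun y : Fin m → ℝ => y j * y k) = fun y => ∏ i, g i (y i) from funext hprod]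
  rw [integral_pi_prod]
  by_cases hjk : j = k
  · subst hjk
    have hgi : ∀ i, ∫ t, g i t ∂nu = if i = j then 2/3 else 2 := by
      intro i
      by_cases hij : i = j
      · simp only [hg, hij, if_true]
        rw [show (fun t : ℝ => t * t) = fun t => t^2 by funext t; ring, nu_int_sq]
      · simp only [hg, hij, if_false]
        rw [show (fun t : ℝ => (1:ℝ) * 1) = fun _ => (1:ℝ) by norm_num, nu_int_one]
    simp_rw [hgi]
    simp only [if_true]
    rw [← Finset.mul_prod_erase univ _ (Finset.mem_univ j), if_pos rfl]
    rw [Finset.prod_congr rfl (fun i hi => if_neg (Finset.mem_erase.mp hi).1),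
      Finset.prod_const, Finset.card_erase_of_mem (Finset.mem_univ j), Finset.card_univ,
      Fintype.card_fin]
  · rw [if_neg hjk]
    apply Finset.prod_eq_zero (Finset.mem_univ j)
    simp only [hg, if_pos rfl, if_neg hjk, if_true, mul_one]
    exact nu_int_id

lemma integral_pi_sq_sum (m : ℕ) (a : Fin (m+1) → ℝ) :
    ∫ y, (∑ j, a j * y j)^2 ∂(Measure.pi fun _ : Fin (m+1) => nu)
      = 2^(m+1)/3 * ∑ j, (a j)^2 := by
  classical
  have expand : (fun y : Fin (m+1) → ℝ => (∑ j, a j * y j)^2)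
      = fun y => ∑ j, ∑ k, (a j * a k) * (y j * y k) := by
    funext y
    rw [sq, Finset.sum_mul_sum]
    exact Finset.sum_congr rfl fun j _ => Finset.sum_congr rfl fun k _ => by ring
  rw [expand]
  rw [integral_finset_sum _ (fun j _ => integrable_finset_sum _
    (fun k _ => ((integrable_coord_prod (m+1) j k).const_mul _)))]
  have : ∀ j : Fin (m+1), ∫ y, ∑ k, (a j * a k) * (y j * y k)
      ∂(Measure.pi fun _ : Fin (m+1) => nu) = (a j)^2 * (2/3 * 2^m) := by
    intro j
    rw [integral_finset_sum _ (fun k _ => ((integrable_coord_prod (m+1) j k).const_mul _))]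
    have hterm : ∀ k : Fin (m+1), ∫ y, (a j * a k) * (y j * y k)
        ∂(Measure.pi fun _ : Fin (m+1) => nu)
        = if j = k then (a j)^2 * (2/3 * 2^m) else 0 := by
      intro k
      rw [integral_const_mul, integral_coord_prod]
      by_cases hjk : j = k
      · subst hjk; simp; ring
      · simp [hjk]
    simp_rw [hterm]
    simp
  simp_rw [this]
  rw [← Finset.sum_mul]
  ring

theorem density_formula (n : ℕ) (hn : 2 ≤ n) (x : ℝ)
    (hx : x ∈ Set.Icc (-1 + 1 / Real.sqrt 2) (1 - 1 / Real.sqrt 2)) :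
    (2 : ℝ) ^ (-(n : ℤ) - 1) *
        ∫ t in {t : Fin n → ℝ | (∀ j, |t j| ≤ 1) ∧
            |∑ j : Fin n, t j * x ^ ((j : ℕ) + 1)| ≤ 1},
          |∑ j : Fin n, ((j : ℕ) + 1 : ℝ) * t j * x ^ (j : ℕ)| =
      1 / 12 * (3 + ∑ k ∈ Finset.range (n - 1), ((k : ℝ) + 2) ^ 2 * x ^ (2 * (k + 1))) := by
  obtain ⟨m, rfl⟩ : ∃ m, n = m + 2 := ⟨n - 2, by omega⟩
  obtain ⟨hx1, hx2⟩ := hx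
  have hxabs : |x| ≤ 1 - 1 / Real.sqrt 2 := abs_le.mpr ⟨by linarith, hx2⟩
  -- step 1 : the set is the box
  have hset : {t : Fin (m+2) → ℝ | (∀ j, |t j| ≤ 1) ∧
      |∑ j : Fin (m+2), t j * x ^ ((j : ℕ) + 1)| ≤ 1}
      = Set.univ.pi fun _ => Set.Icc (-1:ℝ) 1 := by
    ext t
    simp only [Set.mem_setOf_eq, Set.mem_pi, Set.mem_univ, forall_true_left, Set.mem_Icc,
      ← abs_le]
    constructor
    · exact fun h j => h.1 j
    · intro h
      refine ⟨h, ?_⟩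
      calc |∑ j : Fin (m+2), t j * x ^ ((j : ℕ) + 1)|
          ≤ ∑ j : Fin (m+2), |t j * x ^ ((j : ℕ) + 1)| := Finset.abs_sum_le_sum_abs _ _
        _ ≤ ∑ j : Fin (m+2), (((j:ℕ):ℝ) + 2) * |x| ^ ((j : ℕ) + 1) := by
            apply Finset.sum_le_sum
            intro j _
            rw [abs_mul, abs_pow]
            have h1 : |t j| ≤ 1 := h j
            have h2 : (0:ℝ) ≤ |x| ^ ((j:ℕ) + 1) := by positivity
            have h3 : (1:ℝ) ≤ ((j:ℕ):ℝ) + 2 := by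
              have : (0:ℝ) ≤ ((j:ℕ):ℝ) := Nat.cast_nonneg _
              linarith
            nlinarith
        _ = ∑ j ∈ range (m+2), ((j:ℝ) + 2) * |x| ^ (j + 1) :=
            Fin.sum_univ_eq_sum_range (fun j => ((j:ℝ) + 2) * |x| ^ (j + 1)) (m+2)
        _ ≤ 1 := sum_tail_le (m+2) |x| (abs_nonneg x) hxabs
  rw [hset, restrict_box (m+2)]
  -- step 2 : split off the first coordinate
  set c : (Fin (m+1) → ℝ) → ℝ := fun y => ∑ i : Fin (m+1), (((i:ℕ):ℝ) + 2) * y i * x ^ ((i:ℕ)+1)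
    with hc
  have hccont : Continuous c := by fun_prop
  have hint : Integrable (fun z : ℝ × (Fin (m+1) → ℝ) => |z.1 + c z.2|)
      (nu.prod (Measure.pi fun _ : Fin (m+1) => nu)) := by
    rw [← restrict_box (m+1), nu, Measure.prod_restrict, ← Measure.volume_eq_prod]
    exact ContinuousOn.integrableOn_compact
      (isCompact_Icc.prod (isCompact_univ_pi fun _ => isCompact_Icc))
      (continuous_abs.comp (continuous_fst.add (hccont.comp continuous_snd))).continuousOn
  have key : ∫ t, |∑ j : Fin (m+2), ((j : ℕ) + 1 : ℝ) * t j * x ^ (j : ℕ)|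
        ∂(Measure.pi fun _ : Fin (m+2) => nu)
      = ∫ y, ∫ s, |s + c y| ∂nu ∂(Measure.pi fun _ : Fin (m+1) => nu) := by
    rw [← ((measurePreserving_piFinSuccAbove (fun _ : Fin (m+2) => nu) 0).symm).integral_comp']
    have heq : ∀ z : ℝ × (Fin (m+1) → ℝ),
        |∑ j : Fin (m+2), ((j : ℕ) + 1 : ℝ) *
          ((MeasurableEquiv.piFinSuccAbove (fun _ : Fin (m+2) => ℝ) 0).symm z) j * x ^ (j : ℕ)|
        = |z.1 + c z.2| := by
      intro z
      congr 1
      rw [Fin.sum_univ_succ]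
      simp only [MeasurableEquiv.piFinSuccAbove_symm_apply, Fin.insertNthEquiv,
        Equiv.coe_fn_mk, Fin.insertNth_zero, Fin.cons_zero, Fin.cons_succ, cast_eq,
        Fin.val_zero, pow_zero, Nat.cast_zero, Fin.val_succ, hc]
      push_cast
      congr 1
      · ring
      · exact Finset.sum_congr rfl fun i _ => by push_cast; ring
    calc ∫ z : ℝ × (Fin (m+1) → ℝ),
          |∑ j : Fin (m+2), ((j : ℕ) + 1 : ℝ) *
            ((MeasurableEquiv.piFinSuccAbove (fun _ : Fin (m+2) => ℝ) 0).symm z) j * x ^ (j : ℕ)|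
          ∂(nu.prod (Measure.pi fun _ : Fin (m+1) => nu))
        = ∫ z : ℝ × (Fin (m+1) → ℝ), |z.1 + c z.2|
            ∂(nu.prod (Measure.pi fun _ : Fin (m+1) => nu)) := by
          exact integral_congr_ae (Filter.Eventually.of_forall heq)
      _ = ∫ y, ∫ s, |s + c y| ∂nu ∂(Measure.pi fun _ : Fin (m+1) => nu) :=
          integral_prod_symm _ hint
  rw [key]
  -- step 3 : a.e. evaluation of the inner integral
  have hae : (fun y => ∫ s, |s + c y| ∂nu)
      =ᵐ[Measure.pi fun _ : Fin (m+1) => nu] fun y => 1 + (c y)^2 := by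
    have hmem : ∀ᵐ y ∂(Measure.pi fun _ : Fin (m+1) => nu),
        y ∈ Set.univ.pi fun _ : Fin (m+1) => Set.Icc (-1:ℝ) 1 := by
      rw [← restrict_box (m+1)]
      exact ae_restrict_mem (MeasurableSet.univ_pi fun _ => measurableSet_Icc)
    filter_upwards [hmem] with y hy
    have hcy : |c y| ≤ 1 := by
      calc |c y| ≤ ∑ i : Fin (m+1), |(((i:ℕ):ℝ) + 2) * y i * x ^ ((i:ℕ)+1)| :=
            Finset.abs_sum_le_sum_abs _ _
        _ ≤ ∑ i : Fin (m+1), (((i:ℕ):ℝ) + 2) * |x| ^ ((i:ℕ)+1) := by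
            apply Finset.sum_le_sum
            intro i _
            have hyi : |y i| ≤ 1 := abs_le.mpr (hy i (Set.mem_univ i))
            rw [abs_mul, abs_mul, abs_pow]
            have h2 : (0:ℝ) ≤ |x| ^ ((i:ℕ) + 1) := by positivity
            have h3 : |(((i:ℕ):ℝ) + 2)| = ((i:ℕ):ℝ) + 2 := abs_of_nonneg (by positivity)
            rw [h3]
            have h4 : (0:ℝ) ≤ ((i:ℕ):ℝ) + 2 := by positivity
            have h5 := mul_le_mul_of_nonneg_left hyi h4
            nlinarith
        _ = ∑ i ∈ range (m+1), ((i:ℝ) + 2) * |x| ^ (i + 1) :=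
            Fin.sum_univ_eq_sum_range (fun i => ((i:ℝ) + 2) * |x| ^ (i + 1)) (m+1)
        _ ≤ 1 := sum_tail_le (m+1) |x| (abs_nonneg x) hxabs
    exact nu_int_abs (c y) hcy
  rw [integral_congr_ae hae]
  -- step 4 : compute
  have hsq_int : Integrable (fun y => (c y)^2) (Measure.pi fun _ : Fin (m+1) => nu) := by
    rw [← restrict_box (m+1)]
    exact ContinuousOn.integrableOn_compact (isCompact_univ_pi fun _ => isCompact_Icc)
      (hccont.pow 2).continuousOn
  rw [integral_add (integrable_const 1) hsq_int, integral_const, smul_eq_mul, mul_one,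
    measureReal_def, pi_nu_univ]
  have hcsq : ∫ y, (c y)^2 ∂(Measure.pi fun _ : Fin (m+1) => nu)
      = 2^(m+1)/3 * ∑ i : Fin (m+1), ((((i:ℕ):ℝ) + 2) * x ^ ((i:ℕ)+1))^2 := by
    have : (fun y : Fin (m+1) → ℝ => (c y)^2)
        = fun y => (∑ i : Fin (m+1), ((((i:ℕ):ℝ) + 2) * x ^ ((i:ℕ)+1)) * y i)^2 := by
      funext y
      rw [hc]
      congr 1
      exact Finset.sum_congr rfl fun i _ => by ring
    rw [this, integral_pi_sq_sum m (fun i => (((i:ℕ):ℝ) + 2) * x ^ ((i:ℕ)+1))]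
  rw [hcsq]
  -- final arithmetic
  have htr : ((2:ENNReal)^(m+1)).toReal = (2:ℝ)^(m+1) := by
    simp
  rw [htr]
  have hsum : ∑ i : Fin (m+1), ((((i:ℕ):ℝ) + 2) * x ^ ((i:ℕ)+1))^2
      = ∑ k ∈ Finset.range (m+2-1), ((k : ℝ) + 2) ^ 2 * x ^ (2 * (k + 1)) := by
    rw [show m+2-1 = m+1 from rfl,
      Fin.sum_univ_eq_sum_range (fun i => (((i:ℝ) + 2) * x ^ (i+1))^2) (m+1)]
    apply Finset.sum_congr rfl
    intro k _
    rw [mul_comm 2 (k+1), pow_mul]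
    ring
  rw [← hsum]
  have hzpow : (2:ℝ) ^ (-((m+2 : ℕ) : ℤ) - 1) = ((2:ℝ)^(m+3))⁻¹ := by
    rw [show (-((m+2 : ℕ) : ℤ) - 1) = -((m+3 : ℕ) : ℤ) by push_cast; ring, zpow_neg,
      zpow_natCast]
  rw [hzpow]
  have h23 : (2:ℝ)^(m+3) = 2^(m+1) * 4 := by ring
  rw [h23]
  have hpow_pos : (0:ℝ) < 2^(m+1) := by positivity
  field_simp
  norm_num
end
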